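/- Let x and t be natural numbers with 1 ≤ t ≤ x such that ξ(x - t) = ξ(x + t). If there is no prime p with x - t < p < x + t, then x + t is prime. -/

import Mathlib

/-- The prime index function ι(n) = (-1)^π(n), where π is the prime counting
function (number of primes ≤ n). -/
def iota (n : ℕ) : ℤ := (-1) ^ (Nat.primeCounting n)

/-- The second prime index function ξ(x) = ∑_{n=1}^{x} ι(n). -/
def xi (x : ℕ) : ℤ := ∑ n ∈ Finset.Icc 1 x, iota n

lemma primeCounting_succ_of_not_prime {n : ℕ} (h : ¬ Nat.Prime (n + 1)) :
    Nat.primeCounting (n + 1) = Nat.primeCounting n := by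
  simp only [Nat.primeCounting, Nat.primeCounting']
  rw [Nat.count_succ, if_neg h, add_zero]

theorem prime_of_oscillation_no_prime_inside (x t : ℕ) (ht1 : 1 ≤ t) (ht2 : t ≤ x)
    (hosc : xi (x - t) = xi (x + t))
    (hnp : ∀ p : ℕ, Nat.Prime p → ¬(x - t < p ∧ p < x + t)) :
    Nat.Prime (x + t) := by
  by_contra hp
  -- π is constant on [x - t, x + t]
  have hconst : ∀ n, x - t ≤ n → n ≤ x + t →
      Nat.primeCounting n = Nat.primeCounting (x - t) := by
    intro n hn
    induction n, hn using Nat.le_induction with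
    | base => intro; rfl
    | succ n hn ih =>
      intro hle
      have hnot : ¬ Nat.Prime (n + 1) := by
        intro hpr
        rcases lt_or_eq_of_le hle with hlt | heq
        · exact hnp _ hpr ⟨Nat.lt_succ_of_le hn, hlt⟩
        · exact hp (heq ▸ hpr)
      rw [primeCounting_succ_of_not_prime hnot, ih (le_of_lt (Nat.lt_of_succ_le hle))]
  -- the sum over Ioc (x-t) (x+t) vanishes
  have hle1 : (0 : ℕ) ≤ x - t := Nat.zero_le _
  have hle2 : x - t ≤ x + t := le_trans (Nat.sub_le _ _) (Nat.le_add_right _ _)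
  have hsplit := Finset.sum_Ioc_consecutive (fun n => iota n) hle1 hle2
  have hxi : ∀ y : ℕ, xi y = ∑ n ∈ Finset.Ioc 0 y, iota n := by
    intro y
    rw [xi, ← Finset.Icc_add_one_left_eq_Ioc, zero_add]
  have hzero : ∑ n ∈ Finset.Ioc (x - t) (x + t), iota n = 0 := by
    have := hosc
    rw [hxi, hxi, ← hsplit] at this
    linarith
  -- each term equals iota (x - t)
  have hval : ∀ n ∈ Finset.Ioc (x - t) (x + t), iota n = iota (x - t) := by
    intro n hn
    rw [Finset.mem_Ioc] at hn
    unfold iota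
    rw [hconst n (le_of_lt hn.1) hn.2]
  rw [Finset.sum_congr rfl hval, Finset.sum_const, Nat.card_Ioc] at hzero
  have hcard : x + t - (x - t) = 2 * t := by omega
  rw [hcard] at hzero
  have : ((2 * t : ℕ) : ℤ) • iota (x - t) ≠ 0 := by
    apply smul_ne_zero
    · simp; omega
    · unfold iota
      positivity
  exact this (by exact_mod_cast hzero)
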